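/- arXiv:2604.13043 — 3 statements merged into one kernel-verified Lean document; each statement's English description precedes it below -/
import Mathlib

section
/- For every t ∈ [0,1] with t ≤ t_K := η + (βΓ(α))^{1/(α−1)}, one has K(t,s) ≥ 0 for all s ∈ [0,1]. -/
open Set MeasureTheory

/-- The Green's function `K(t,s) = β + ((η−s)^{α−1}/Γ(α))·χ_{[0,η]}(s) −
((t−s)^{α−1}/Γ(α))·χ_{[0,t]}(s)`. -/
noncomputable def Kker (α η β t s : ℝ) : ℝ :=
  β + (Set.Icc (0:ℝ) η).indicator (fun x => (η - x) ^ (α - 1) / Real.Gamma α) s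
    - (Set.Icc (0:ℝ) t).indicator (fun x => (t - x) ^ (α - 1) / Real.Gamma α) s

/-- The function `γ(t) = β/Γ(3−α) + η − t`. -/
noncomputable def gam (α η β t : ℝ) : ℝ := β / Real.Gamma (3 - α) + η - t

/-- Subadditivity of `rpow` with exponent in `[0,1]` on nonnegative reals. -/
lemma real_rpow_add_le_add_rpow {a b p : ℝ} (ha : 0 ≤ a) (hb : 0 ≤ b)
    (hp : 0 ≤ p) (hp1 : p ≤ 1) : (a + b) ^ p ≤ a ^ p + b ^ p := by
  have h := NNReal.rpow_add_le_add_rpow a.toNNReal b.toNNReal hp hp1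
  have h' := NNReal.coe_le_coe.2 h
  simpa [NNReal.coe_rpow, Real.coe_toNNReal _ ha, Real.coe_toNNReal _ hb,
    Real.coe_toNNReal _ (add_nonneg ha hb)] using h'

/-- for every `t ∈ [0,1]` with `t ≤ t_K := η + (βΓ(α))^{1/(α−1)}`,
one has `K(t,s) ≥ 0` for all `s ∈ [0,1]`. -/
theorem stmt_4 (α η β : ℝ) (hα1 : 1 < α) (hα2 : α ≤ 2) (hη0 : 0 < η) (hη1 : η < 1)
    (hβ : 0 < β) :
    ∀ t ∈ Set.Icc (0:ℝ) 1, t ≤ η + (β * Real.Gamma α) ^ (1 / (α - 1)) →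
      ∀ s ∈ Set.Icc (0:ℝ) 1, 0 ≤ Kker α η β t s := by
  intro t ht htK s hs
  obtain ⟨hs0, hs1⟩ := hs
  have hΓ : 0 < Real.Gamma α := Real.Gamma_pos_of_pos (lt_trans one_pos hα1)
  set p := α - 1 with hp_def
  have hp0 : 0 < p := by simp [hp_def]; linarith
  have hp1 : p ≤ 1 := by simp [hp_def]; linarith
  set c := (β * Real.Gamma α) ^ (1 / p) with hc_def
  have hβΓ : 0 ≤ β * Real.Gamma α := le_of_lt (mul_pos hβ hΓ)
  have hc0 : 0 ≤ c := Real.rpow_nonneg hβΓ _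
  have hcp : c ^ p = β * Real.Gamma α := by
    rw [hc_def, ← Real.rpow_mul hβΓ, one_div_mul_cancel (ne_of_gt hp0), Real.rpow_one]
  unfold Kker
  by_cases hst : s ≤ t
  · have hmem : s ∈ Set.Icc (0:ℝ) t := ⟨hs0, hst⟩
    rw [Set.indicator_of_mem hmem]
    by_cases hsη : s ≤ η
    · have hmem2 : s ∈ Set.Icc (0:ℝ) η := ⟨hs0, hsη⟩
      rw [Set.indicator_of_mem hmem2]
      have key : (t - s) ^ p ≤ (η - s) ^ p + β * Real.Gamma α := by
        have h1 : (t - s) ^ p ≤ ((η - s) + c) ^ p := by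
          apply Real.rpow_le_rpow (sub_nonneg.2 hst) _ hp0.le
          linarith
        have h2 : ((η - s) + c) ^ p ≤ (η - s) ^ p + c ^ p :=
          real_rpow_add_le_add_rpow (sub_nonneg.2 hsη) hc0 hp0.le hp1
        rw [hcp] at h2
        linarith
      have hdiv : (t - s) ^ p / Real.Gamma α ≤
          (η - s) ^ p / Real.Gamma α + β := by
        rw [div_le_iff₀ hΓ, add_mul, div_mul_cancel₀ _ (ne_of_gt hΓ)]
        linarith [key]
      linarith
    · rw [Set.indicator_of_notMem (s := Set.Icc (0:ℝ) η) (fun h => hsη h.2)]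
      have hts : t - s ≤ c := by
        have : η ≤ s := le_of_not_ge hsη
        linarith
      have key : (t - s) ^ p ≤ β * Real.Gamma α := by
        rw [← hcp]
        exact Real.rpow_le_rpow (sub_nonneg.2 hst) hts hp0.le
      have hdiv : (t - s) ^ p / Real.Gamma α ≤ β := by
        rw [div_le_iff₀ hΓ]; linarith
      linarith
  · rw [Set.indicator_of_notMem (s := Set.Icc (0:ℝ) t) (fun h => hst h.2)]
    have hind : 0 ≤ (Set.Icc (0:ℝ) η).indicator
        (fun x => (η - x) ^ (α - 1) / Real.Gamma α) s := by
      apply Set.indicator_nonneg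
      intro x hx
      exact div_nonneg (Real.rpow_nonneg (sub_nonneg.2 hx.2) _) hΓ.le
    linarith
end

section
/- Suppose 0 < β < β_K := (1−η)^{α−1}/Γ(α) and fix b ∈ [η,1) with βΓ(α) > (b−η)^{α−1}. Then with Φ(s) = max{(βΓ(α)+η^{α−1})/Γ(α), ((1−η)^{α−1}−βΓ(α))/Γ(α)} and c_{3,K} = min{(βΓ(α)−(b−η)^{α−1})/(βΓ(α)+η^{α−1}), (βΓ(α)−(b−η)^{α−1})/((1−η)^{α−1}−βΓ(α))} ∈ (0,1], one has |K(t,s)| ≤ Φ(s) for all t,s ∈ [0,1] and K(t,s) ≥ c_{3,K}·Φ(s) for all t ∈ [0,b] and s ∈ [0,1]. -/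
open Set MeasureTheory

lemma rpow_add_le_add_rpow' (x y p : ℝ) (hx : 0 ≤ x) (hy : 0 ≤ y) (hp : 0 ≤ p)
    (hp1 : p ≤ 1) : (x + y) ^ p ≤ x ^ p + y ^ p := by
  lift x to NNReal using hx
  lift y to NNReal using hy
  exact_mod_cast NNReal.rpow_add_le_add_rpow x y hp hp1

lemma kker_upper (α η β t s : ℝ) (hα1 : 1 < α) (hη0 : 0 < η) :
    Kker α η β t s ≤ β + η ^ (α - 1) / Real.Gamma α := by
  have hG : 0 < Real.Gamma α := Real.Gamma_pos_of_pos (by linarith)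
  have hp0 : (0:ℝ) ≤ α - 1 := by linarith
  have h1 : (Set.Icc (0:ℝ) η).indicator (fun x => (η - x) ^ (α - 1) / Real.Gamma α) s
      ≤ η ^ (α - 1) / Real.Gamma α := by
    by_cases hs : s ∈ Set.Icc (0:ℝ) η
    · rw [Set.indicator_of_mem hs]
      have hs' := Set.mem_Icc.1 hs
      have : (η - s) ^ (α - 1) ≤ η ^ (α - 1) :=
        Real.rpow_le_rpow (by linarith [hs'.2]) (by linarith [hs'.1]) hp0
      exact div_le_div_of_nonneg_right this hG.le
    · rw [Set.indicator_of_notMem hs]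
      have h0 : (0:ℝ) ≤ η := hη0.le
      exact div_nonneg (Real.rpow_nonneg h0 _) hG.le
  have h2 : 0 ≤ (Set.Icc (0:ℝ) t).indicator (fun x => (t - x) ^ (α - 1) / Real.Gamma α) s := by
    apply Set.indicator_nonneg
    intro x hx
    have h0 : (0:ℝ) ≤ t - x := by linarith [(Set.mem_Icc.1 hx).2]
    exact div_nonneg (Real.rpow_nonneg h0 _) hG.le
  unfold Kker
  linarith

lemma kker_lower (α η β t s u : ℝ) (hα1 : 1 < α) (hα2 : α ≤ 2) (hη0 : 0 < η)
    (ht0 : 0 ≤ t) (htu : t ≤ u) (hηu : η ≤ u) (hs0 : 0 ≤ s) :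
    β - (u - η) ^ (α - 1) / Real.Gamma α ≤ Kker α η β t s := by
  have hG : 0 < Real.Gamma α := Real.Gamma_pos_of_pos (by linarith)
  have hp0 : (0:ℝ) ≤ α - 1 := by linarith
  have hp1 : α - 1 ≤ 1 := by linarith
  have hD : 0 ≤ (u - η) ^ (α - 1) / Real.Gamma α :=
    div_nonneg (Real.rpow_nonneg (by linarith) _) hG.le
  unfold Kker
  by_cases hst : s ≤ t
  · rw [Set.indicator_of_mem (Set.mem_Icc.2 ⟨hs0, hst⟩)]
    by_cases hsη : s ≤ η
    · rw [Set.indicator_of_mem (Set.mem_Icc.2 ⟨hs0, hsη⟩)]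
      by_cases htη : t ≤ η
      · have h1 : (t - s) ^ (α - 1) ≤ (η - s) ^ (α - 1) :=
          Real.rpow_le_rpow (by linarith) (by linarith) hp0
        have h2 := div_le_div_of_nonneg_right h1 hG.le
        linarith
      · have heq : t - s = (t - η) + (η - s) := by ring
        have h1 : (t - s) ^ (α - 1) ≤ (t - η) ^ (α - 1) + (η - s) ^ (α - 1) := by
          rw [heq]
          exact rpow_add_le_add_rpow' _ _ _ (by linarith) (by linarith) hp0 hp1
        have h2 : (t - η) ^ (α - 1) ≤ (u - η) ^ (α - 1) :=
          Real.rpow_le_rpow (by linarith) (by linarith) hp0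
        have h3 : (t - s) ^ (α - 1) / Real.Gamma α
            ≤ ((u - η) ^ (α - 1) + (η - s) ^ (α - 1)) / Real.Gamma α :=
          div_le_div_of_nonneg_right (by linarith) hG.le
        rw [add_div] at h3
        linarith
    · rw [Set.indicator_of_notMem (fun h => hsη (Set.mem_Icc.1 h).2)]
      have h1 : (t - s) ^ (α - 1) ≤ (u - η) ^ (α - 1) :=
        Real.rpow_le_rpow (by linarith) (by linarith) hp0
      have h2 := div_le_div_of_nonneg_right h1 hG.le
      linarith
  · rw [Set.indicator_of_notMem (fun h => hst (Set.mem_Icc.1 h).2)]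
    have h2 : 0 ≤ (Set.Icc (0:ℝ) η).indicator (fun x => (η - x) ^ (α - 1) / Real.Gamma α) s := by
      apply Set.indicator_nonneg
      intro x hx
      have h0 : (0:ℝ) ≤ η - x := by linarith [(Set.mem_Icc.1 hx).2]
      exact div_nonneg (Real.rpow_nonneg h0 _) hG.le
    linarith

/-- if `0 < β < β_K` and `b ∈ [η,1)` with `βΓ(α) > (b−η)^{α−1}`, then with
`Φ(s) = max{(βΓ(α)+η^{α−1})/Γ(α), ((1−η)^{α−1}−βΓ(α))/Γ(α)}` and
`c_{3,K} = min{(βΓ(α)−(b−η)^{α−1})/(βΓ(α)+η^{α−1}),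
(βΓ(α)−(b−η)^{α−1})/((1−η)^{α−1}−βΓ(α))} ∈ (0,1]`, one has `|K(t,s)| ≤ Φ(s)` for all
`t, s ∈ [0,1]` and `K(t,s) ≥ c_{3,K}·Φ(s)` for all `t ∈ [0,b]`, `s ∈ [0,1]`. -/
theorem stmt_8 (α η β : ℝ) (hα1 : 1 < α) (hα2 : α ≤ 2) (hη0 : 0 < η) (hη1 : η < 1)
    (hβ : 0 < β) (hβK : β < (1 - η) ^ (α - 1) / Real.Gamma α)
    (b : ℝ) (hbl : η ≤ b) (hbu : b < 1) (hbβ : (b - η) ^ (α - 1) < β * Real.Gamma α)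
    (Φ : ℝ → ℝ)
    (hΦ : ∀ s, Φ s = max ((β * Real.Gamma α + η ^ (α - 1)) / Real.Gamma α)
      (((1 - η) ^ (α - 1) - β * Real.Gamma α) / Real.Gamma α))
    (c : ℝ)
    (hc : c = min
      ((β * Real.Gamma α - (b - η) ^ (α - 1)) / (β * Real.Gamma α + η ^ (α - 1)))
      ((β * Real.Gamma α - (b - η) ^ (α - 1)) / ((1 - η) ^ (α - 1) - β * Real.Gamma α))) :
    c ∈ Set.Ioc (0:ℝ) 1 ∧
    (∀ t ∈ Set.Icc (0:ℝ) 1, ∀ s ∈ Set.Icc (0:ℝ) 1, |Kker α η β t s| ≤ Φ s) ∧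
    (∀ t ∈ Set.Icc (0:ℝ) b, ∀ s ∈ Set.Icc (0:ℝ) 1, c * Φ s ≤ Kker α η β t s) := by
  have hG : 0 < Real.Gamma α := Real.Gamma_pos_of_pos (by linarith)
  set G := Real.Gamma α with hGdef
  set A := β * G + η ^ (α - 1) with hAdef
  set B := (1 - η) ^ (α - 1) - β * G with hBdef
  set N := β * G - (b - η) ^ (α - 1) with hNdef
  have hηp : 0 < η ^ (α - 1) := Real.rpow_pos_of_pos hη0 _
  have hA : 0 < A := by positivity
  have hB : 0 < B := by
    have := (lt_div_iff₀ hG).1 hβK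
    simp only [hBdef]; linarith
  have hN : 0 < N := by simp only [hNdef]; linarith
  have hNA : N < A := by
    have h0 : (0:ℝ) ≤ b - η := by linarith
    have : 0 ≤ (b - η) ^ (α - 1) := Real.rpow_nonneg h0 _
    simp only [hNdef, hAdef]; linarith
  have hΦ' : ∀ s, Φ s = max A B / G := by
    intro s
    rw [hΦ s, max_div_div_right hG.le]
  have hc' : c = N / max A B := by
    rw [hc]
    rcases le_total A B with h | h
    · rw [max_eq_right h, min_eq_right (by gcongr)]
    · rw [max_eq_left h, min_eq_left (by gcongr)]
  have hmax : 0 < max A B := lt_max_of_lt_left hA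
  have hcΦ : ∀ s, c * Φ s = β - (b - η) ^ (α - 1) / G := by
    intro s
    rw [hΦ' s, hc', div_mul_div_comm, mul_comm N (max A B), mul_div_mul_left _ _ hmax.ne']
    rw [hNdef, sub_div, mul_div_cancel_right₀ _ hG.ne']
  refine ⟨⟨?_, ?_⟩, ?_, ?_⟩
  · rw [hc']
    exact div_pos hN hmax
  · rw [hc', div_le_one hmax]
    exact le_trans hNA.le (le_max_left _ _)
  · intro t ht s hs
    rw [abs_le, hΦ' s]
    constructor
    · have h1 := kker_lower α η β t s 1 hα1 hα2 hη0 (Set.mem_Icc.1 ht).1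
        (Set.mem_Icc.1 ht).2 hη1.le (Set.mem_Icc.1 hs).1
      have h2 : -(max A B / G) ≤ -(B / G) := by
        apply neg_le_neg
        exact div_le_div_of_nonneg_right (le_max_right _ _) hG.le
      have h3 : -(B / G) = β - (1 - η) ^ (α - 1) / G := by
        rw [hBdef, sub_div, mul_div_cancel_right₀ _ hG.ne']; ring
      linarith
    · have h1 := kker_upper α η β t s hα1 hη0
      have h2 : β + η ^ (α - 1) / G = A / G := by
        rw [hAdef, add_div, mul_div_cancel_right₀ _ hG.ne']
      have h3 : A / G ≤ max A B / G := div_le_div_of_nonneg_right (le_max_left _ _) hG.le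
      linarith
  · intro t ht s hs
    rw [hcΦ s]
    exact kker_lower α η β t s b hα1 hα2 hη0 (Set.mem_Icc.1 ht).1
      (Set.mem_Icc.1 ht).2 hbl (Set.mem_Icc.1 hs).1
end

section
/- (Monotonicity of Tu) Suppose β ≥ max{β_K, β_γ}. Then for every u ∈ C([0,1],ℝ), the function T(u) is nonnegative and nonincreasing on [0,1]; in particular ‖T(u)‖_∞ = T(u)(0). -/
open Set MeasureTheory

/-- `C([0,1],ℝ)` with the supremum norm. -/
abbrev CI := ContinuousMap (Set.Icc (0:ℝ) 1) ℝ

/-- continuous representative of the kernel -/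
noncomputable def Kc (α η β t s : ℝ) : ℝ :=
  β + (max (η - s) 0) ^ (α - 1) / Real.Gamma α - (max (t - s) 0) ^ (α - 1) / Real.Gamma α

lemma rpow_subadd {x y p : ℝ} (hx : 0 ≤ x) (hy : 0 ≤ y) (hp : 0 ≤ p) (hp1 : p ≤ 1) :
    (x + y) ^ p ≤ x ^ p + y ^ p := by
  have h := NNReal.rpow_add_le_add_rpow x.toNNReal y.toNNReal hp hp1
  have := NNReal.coe_le_coe.2 h
  push_cast [NNReal.coe_rpow, Real.coe_toNNReal x hx, Real.coe_toNNReal y hy,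
    ← Real.toNNReal_add hx hy] at this
  simpa [Real.coe_toNNReal _ (add_nonneg hx hy)] using this

lemma Kker_eq_Kc {α η β : ℝ} (hα1 : 1 < α) (hη0 : 0 ≤ η) {t s : ℝ}
    (ht : t ∈ Icc (0:ℝ) 1) (hs : s ∈ Icc (0:ℝ) 1) :
    Kker α η β t s = Kc α η β t s := by
  have hp : (0:ℝ) < α - 1 := by linarith
  have key : ∀ c : ℝ, 0 ≤ c →
      (Set.Icc (0:ℝ) c).indicator (fun x => (c - x) ^ (α - 1) / Real.Gamma α) s
        = (max (c - s) 0) ^ (α - 1) / Real.Gamma α := by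
    intro c hc
    by_cases h : s ≤ c
    · rw [Set.indicator_of_mem (Set.mem_Icc.2 ⟨hs.1, h⟩), max_eq_left (by linarith)]
    · rw [Set.indicator_of_notMem (fun hm => h hm.2), max_eq_right (by push_neg at h; linarith),
        Real.zero_rpow hp.ne', zero_div]
  rw [Kker, Kc, key η hη0, key t ht.1]

lemma Kc_cont {α η β t : ℝ} (hα1 : 1 < α) : Continuous (Kc α η β t) := by
  have h : Continuous fun x : ℝ => x ^ (α - 1) := Real.continuous_rpow_const (by linarith)
  exact ((continuous_const.add ((h.comp ((continuous_const.sub continuous_id).max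
    continuous_const)).div_const _)).sub
    ((h.comp ((continuous_const.sub continuous_id).max continuous_const)).div_const _))

lemma Kc_nonneg {α η β : ℝ} (hα1 : 1 < α) (hα2 : α ≤ 2) (hη1 : η < 1)
    (hβK : (1 - η) ^ (α - 1) / Real.Gamma α ≤ β) {t s : ℝ}
    (ht : t ∈ Icc (0:ℝ) 1) (hs : s ∈ Icc (0:ℝ) 1) :
    0 ≤ Kc α η β t s := by
  have hΓ : 0 < Real.Gamma α := Real.Gamma_pos_of_pos (by linarith)
  have hp0 : (0:ℝ) ≤ α - 1 := by linarith
  set a := max (t - s) 0 with ha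
  set b := max (η - s) 0 with hb
  have hb0 : 0 ≤ b := le_max_right _ _
  have habc : a ≤ b + (1 - η) := by
    rcases le_or_gt (t - s) 0 with h | h
    · rw [ha, max_eq_right h]; linarith
    · rw [ha, max_eq_left h.le]
      rcases le_or_gt s η with h2 | h2
      · calc t - s ≤ (η - s) + (1 - η) := by linarith [ht.2]
          _ ≤ b + (1 - η) := by gcongr; exact le_max_left _ _
      · have : t - s ≤ 1 - η := by linarith [ht.2]
        linarith
  have h1 : a ^ (α - 1) ≤ b ^ (α - 1) + (1 - η) ^ (α - 1) := by
    calc a ^ (α - 1) ≤ (b + (1 - η)) ^ (α - 1) :=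
          Real.rpow_le_rpow (le_max_right _ _) habc hp0
      _ ≤ b ^ (α - 1) + (1 - η) ^ (α - 1) :=
          rpow_subadd hb0 (by linarith) hp0 (by linarith)
  unfold Kc
  have h2 : a ^ (α - 1) / Real.Gamma α ≤ (b ^ (α - 1) + (1 - η) ^ (α - 1)) / Real.Gamma α := by
    gcongr
  rw [add_div] at h2
  linarith

lemma Kc_anti {α η β : ℝ} (hα1 : 1 < α) {t₁ t₂ s : ℝ} (h : t₁ ≤ t₂) :
    Kc α η β t₂ s ≤ Kc α η β t₁ s := by
  have hΓ : 0 < Real.Gamma α := Real.Gamma_pos_of_pos (by linarith)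
  unfold Kc
  have : (max (t₁ - s) 0) ^ (α - 1) ≤ (max (t₂ - s) 0) ^ (α - 1) :=
    Real.rpow_le_rpow (le_max_right _ _) (max_le_max (by linarith) le_rfl) (by linarith)
  have h2 : (max (t₁ - s) 0) ^ (α - 1) / Real.Gamma α
      ≤ (max (t₂ - s) 0) ^ (α - 1) / Real.Gamma α := by gcongr
  linarith

/-- Monotonicity of `Tu`: if `β ≥ max{β_K, β_γ}` then for every
`u ∈ C([0,1],ℝ)` the function `T(u)` is nonnegative and nonincreasing on `[0,1]`;
in particular `‖T(u)‖_∞ = T(u)(0)`. -/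
theorem stmt_14
    (α η β : ℝ) (hα1 : 1 < α) (hα2 : α ≤ 2) (hη0 : 0 < η) (hη1 : η < 1) (hβ0 : 0 < β)
    (f : ℝ → ℝ → ℝ)
    (hf : ContinuousOn (fun p : ℝ × ℝ => f p.1 p.2) (Set.Icc (0:ℝ) 1 ×ˢ Set.univ))
    (hf0 : ∀ t ∈ Set.Icc (0:ℝ) 1, ∀ x : ℝ, 0 ≤ f t x)
    (H₁ H₂ : CI → ℝ) (hH₁c : Continuous H₁) (hH₂c : Continuous H₂)
    (hH₁0 : ∀ u, 0 ≤ H₁ u) (hH₂0 : ∀ u, 0 ≤ H₂ u)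
    (hH₁b : ∀ S : Set CI, Bornology.IsBounded S → Bornology.IsBounded (H₁ '' S))
    (hH₂b : ∀ S : Set CI, Bornology.IsBounded S → Bornology.IsBounded (H₂ '' S))
    (T : CI → CI)
    (hT : ∀ (u : CI) (t : Set.Icc (0:ℝ) 1), T u t = H₁ u * gam α η β (t : ℝ) + H₂ u +
      ∫ s in (0:ℝ)..1, Kker α η β (t : ℝ) s * f s (Set.IccExtend zero_le_one u s))
    (hβ : max ((1 - η) ^ (α - 1) / Real.Gamma α) ((1 - η) * Real.Gamma (3 - α)) ≤ β) :
    ∀ u : CI, (∀ t, 0 ≤ T u t) ∧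
      (∀ t₁ t₂ : Set.Icc (0:ℝ) 1, (t₁ : ℝ) ≤ (t₂ : ℝ) → T u t₂ ≤ T u t₁) ∧
      ‖T u‖ = T u ⟨0, by norm_num⟩ := by

  intro u
  have hΓ3 : 0 < Real.Gamma (3 - α) := Real.Gamma_pos_of_pos (by linarith)
  have hβK : (1 - η) ^ (α - 1) / Real.Gamma α ≤ β := le_trans (le_max_left _ _) hβ
  have hβγ : (1 - η) * Real.Gamma (3 - α) ≤ β := le_trans (le_max_right _ _) hβ
  set w : ℝ → ℝ := fun s => f s (Set.IccExtend zero_le_one u s) with hw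
  have hwc : ContinuousOn w (Icc (0:ℝ) 1) := by
    have hu : Continuous (Set.IccExtend zero_le_one (u : Icc (0:ℝ) 1 → ℝ)) :=
      u.continuous.Icc_extend'
    exact hf.comp (Continuous.continuousOn (continuous_id.prodMk hu))
      (fun s hs => ⟨hs, mem_univ _⟩)
  have hw0 : ∀ s ∈ Icc (0:ℝ) 1, 0 ≤ w s := fun s hs => hf0 s hs _
  have key : ∀ t : Icc (0:ℝ) 1,
      (∫ s in (0:ℝ)..1, Kker α η β (t : ℝ) s * w s)
        = ∫ s in (0:ℝ)..1, Kc α η β (t : ℝ) s * w s := by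
    intro t
    apply intervalIntegral.integral_congr
    intro s hs
    rw [uIcc_of_le zero_le_one] at hs
    simp only
    rw [Kker_eq_Kc hα1 hη0.le t.2 hs]
  have hIc : ∀ t : Icc (0:ℝ) 1,
      IntervalIntegrable (fun s => Kc α η β (t : ℝ) s * w s) volume 0 1 := by
    intro t
    apply ContinuousOn.intervalIntegrable
    rw [uIcc_of_le zero_le_one]
    exact ((Kc_cont hα1).continuousOn).mul hwc
  have hgam0 : ∀ t : Icc (0:ℝ) 1, 0 ≤ gam α η β (t : ℝ) := by
    intro t
    have h1 : (1 - η) ≤ β / Real.Gamma (3 - α) := (le_div_iff₀ hΓ3).2 (by linarith)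
    have := t.2.2
    unfold gam; linarith
  have Tval : ∀ t : Icc (0:ℝ) 1, T u t = H₁ u * gam α η β (t : ℝ) + H₂ u +
      ∫ s in (0:ℝ)..1, Kc α η β (t : ℝ) s * w s := by
    intro t; rw [hT u t, ← key t]
  have hpos : ∀ t : Icc (0:ℝ) 1, 0 ≤ T u t := by
    intro t
    rw [Tval t]
    have hI : 0 ≤ ∫ s in (0:ℝ)..1, Kc α η β (t : ℝ) s * w s :=
      intervalIntegral.integral_nonneg zero_le_one
        (fun s hs => mul_nonneg (Kc_nonneg hα1 hα2 hη1 hβK t.2 hs) (hw0 s hs))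
    have := mul_nonneg (hH₁0 u) (hgam0 t)
    have := hH₂0 u
    linarith
  have hmono : ∀ t₁ t₂ : Icc (0:ℝ) 1, (t₁ : ℝ) ≤ (t₂ : ℝ) → T u t₂ ≤ T u t₁ := by
    intro t₁ t₂ h
    rw [Tval t₁, Tval t₂]
    have hg : gam α η β (t₂ : ℝ) ≤ gam α η β (t₁ : ℝ) := by unfold gam; linarith
    have h1 : H₁ u * gam α η β (t₂ : ℝ) ≤ H₁ u * gam α η β (t₁ : ℝ) :=
      mul_le_mul_of_nonneg_left hg (hH₁0 u)
    have h2 : (∫ s in (0:ℝ)..1, Kc α η β (t₂ : ℝ) s * w s)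
        ≤ ∫ s in (0:ℝ)..1, Kc α η β (t₁ : ℝ) s * w s :=
      intervalIntegral.integral_mono_on zero_le_one (hIc t₂) (hIc t₁)
        (fun s hs => mul_le_mul_of_nonneg_right (Kc_anti hα1 h) (hw0 s hs))
    linarith
  refine ⟨hpos, hmono, ?_⟩
  have h0 : (⟨0, by norm_num⟩ : Icc (0:ℝ) 1) = ⟨0, by norm_num⟩ := rfl
  apply le_antisymm
  · rw [ContinuousMap.norm_le _ (hpos _)]
    intro t
    rw [Real.norm_eq_abs, abs_of_nonneg (hpos t)]
    exact hmono _ t t.2.1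
  · calc T u ⟨0, by norm_num⟩ ≤ ‖T u ⟨0, by norm_num⟩‖ := le_abs_self _
      _ ≤ ‖T u‖ := (T u).norm_coe_le_norm _
end
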